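/- Let q be an odd prime, n ≥ 1 with (q-1) ∤ n, i ≥ 1 with q^i | n, and let g be a primitive root modulo q. Then (g^n - 1) · S_n(q) ≡ 0 (mod q^(i+1)), and since g^n ≢ 1 (mod q), it follows that S_n(q) ≡ 0 (mod q^(i+1)). -/

import Mathlib

def S (n m : ℕ) : ℕ := ∑ i ∈ Finset.Icc 1 m, i ^ n

lemma key_pow_cong {q i n : ℕ} (hdvd : q ^ i ∣ n) {a b : ℤ}
    (hab : (q : ℤ) ∣ a - b) : ((q : ℤ)) ^ (i + 1) ∣ a ^ n - b ^ n := by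
  obtain ⟨m, rfl⟩ := hdvd
  have h1 : ((q : ℤ)) ^ (i + 1) ∣ a ^ q ^ i - b ^ q ^ i := by
    have := dvd_sub_pow_of_dvd_sub hab i
    push_cast at this
    exact this
  have h2 : a ^ q ^ i - b ^ q ^ i ∣ (a ^ q ^ i) ^ m - (b ^ q ^ i) ^ m :=
    sub_dvd_pow_sub_pow _ _ m
  rw [← pow_mul, ← pow_mul] at h2
  exact h1.trans h2

theorem stmt17 (q n i g : ℕ) (hq : q.Prime) (hodd : Odd q) (hn : 1 ≤ n)
    (hnd : ¬ (q - 1 ∣ n)) (hi : 1 ≤ i) (hdvd : q ^ i ∣ n)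
    (hg : IsPrimitiveRoot (g : ZMod q) (q - 1)) :
    ((g : ℤ) ^ n - 1) * (S n q : ℤ) ≡ 0 [ZMOD ((q : ℤ) ^ (i + 1))] ∧
    ¬ ((g : ℤ) ^ n ≡ 1 [ZMOD (q : ℤ)]) ∧
    S n q ≡ 0 [MOD q ^ (i + 1)] := by
  haveI : Fact q.Prime := ⟨hq⟩
  have hq1 : 1 < q := hq.one_lt
  -- g is not divisible by q
  have hgd : ¬ q ∣ g := by
    intro h
    have h0 : (g : ZMod q) = 0 := (ZMod.natCast_eq_zero_iff g q).mpr h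
    have hu : IsUnit (g : ZMod q) := hg.isUnit (by omega)
    rw [h0] at hu
    exact not_isUnit_zero hu
  -- key congruence in ZMod (q ^ (i + 1))
  have keyN : ∀ a b : ℕ, a % q = b % q → ((a : ZMod (q ^ (i + 1)))) ^ n = (b : ZMod (q ^ (i + 1))) ^ n := by
    intro a b hab
    have h1 : (q : ℤ) ∣ (b : ℤ) - a := (Nat.modEq_iff_dvd (n := q)).mp hab
    have h2 : ((q : ℤ)) ^ (i + 1) ∣ (b : ℤ) ^ n - (a : ℤ) ^ n := key_pow_cong hdvd h1
    have h3 : (((b : ℤ) ^ n - (a : ℤ) ^ n : ℤ) : ZMod (q ^ (i + 1))) = 0 := by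
      rw [ZMod.intCast_zmod_eq_zero_iff_dvd]
      push_cast
      exact h2
    push_cast at h3
    linear_combination -h3
  -- n is large: i + 1 ≤ n
  have hqin : q ^ i ≤ n := Nat.le_of_dvd (by omega) hdvd
  have hin : i + 1 ≤ n := by
    have := Nat.lt_pow_self (n := i) hq1
    omega
  -- the reindexing sum identity
  have hperm : ∑ j ∈ Finset.Icc 1 (q - 1), (((g * j) % q : ℕ) : ZMod (q ^ (i + 1))) ^ n
      = ∑ j ∈ Finset.Icc 1 (q - 1), ((j : ℕ) : ZMod (q ^ (i + 1))) ^ n := by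
    have hmaps : ∀ j ∈ Finset.Icc 1 (q - 1), (g * j) % q ∈ Finset.Icc 1 (q - 1) := by
      intro j hj
      simp only [Finset.mem_Icc] at hj ⊢
      have hlt : (g * j) % q < q := Nat.mod_lt _ (by omega)
      have hne : (g * j) % q ≠ 0 := by
        intro h0
        have : q ∣ g * j := Nat.dvd_of_mod_eq_zero h0
        rcases (Nat.Prime.dvd_mul hq).mp this with h | h
        · exact hgd h
        · have := Nat.le_of_dvd (by omega) h
          omega
      omega
    have hinj : ∀ j ∈ Finset.Icc 1 (q - 1), ∀ j' ∈ Finset.Icc 1 (q - 1),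
        (g * j) % q = (g * j') % q → j = j' := by
      intro j hj j' hj' hjj
      simp only [Finset.mem_Icc] at hj hj'
      have hcop : Nat.Coprime q g := (hq.coprime_iff_not_dvd).mpr hgd
      have : j ≡ j' [MOD q] := Nat.ModEq.cancel_left_of_coprime hcop hjj
      have h1 : j % q = j' % q := this
      rw [Nat.mod_eq_of_lt (by omega), Nat.mod_eq_of_lt (by omega)] at h1
      exact h1
    have himg : (Finset.Icc 1 (q - 1)).image (fun j => (g * j) % q) = Finset.Icc 1 (q - 1) := by
      apply Finset.eq_of_subset_of_card_le
      · intro k hk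
        rcases Finset.mem_image.mp hk with ⟨j, hj, rfl⟩
        exact hmaps j hj
      · rw [Finset.card_image_of_injOn]
        intro x hx y hy
        exact hinj x (by simpa using hx) y (by simpa using hy)
    calc ∑ j ∈ Finset.Icc 1 (q - 1), (((g * j) % q : ℕ) : ZMod (q ^ (i + 1))) ^ n
        = ∑ k ∈ (Finset.Icc 1 (q - 1)).image (fun j => (g * j) % q),
            ((k : ℕ) : ZMod (q ^ (i + 1))) ^ n := (Finset.sum_image (f := fun k => ((k : ℕ) : ZMod (q ^ (i + 1))) ^ n) (fun x hx y hy h => hinj x hx y hy h)).symm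
      _ = ∑ j ∈ Finset.Icc 1 (q - 1), ((j : ℕ) : ZMod (q ^ (i + 1))) ^ n := by rw [himg]
  -- S mod M
  have hS : ((S n q : ℕ) : ZMod (q ^ (i + 1))) = ∑ j ∈ Finset.Icc 1 (q - 1), ((j : ℕ) : ZMod (q ^ (i + 1))) ^ n := by
    have hq' : q - 1 + 1 = q := by omega
    have : S n q = (∑ j ∈ Finset.Icc 1 (q - 1), j ^ n) + q ^ n := by
      rw [S, ← hq', Finset.sum_Icc_succ_top (by omega)]
      simp
    rw [this]
    push_cast
    have hq0 : ((q : ZMod (q ^ (i + 1)))) ^ n = 0 := by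
      have : ((q ^ n : ℕ) : ZMod (q ^ (i + 1))) = 0 := by
        rw [ZMod.natCast_eq_zero_iff]
        exact pow_dvd_pow q hin
      push_cast at this
      exact this
    rw [hq0, add_zero]
  -- the main identity in ZMod (q ^ (i + 1))
  have hmain : ((g : ZMod (q ^ (i + 1))) ^ n - 1) * ((S n q : ℕ) : ZMod (q ^ (i + 1))) = 0 := by
    rw [sub_mul, one_mul, hS, Finset.mul_sum]
    have hsum : ∑ j ∈ Finset.Icc 1 (q - 1), (g : ZMod (q ^ (i + 1))) ^ n * ((j : ℕ) : ZMod (q ^ (i + 1))) ^ n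
        = ∑ j ∈ Finset.Icc 1 (q - 1), ((j : ℕ) : ZMod (q ^ (i + 1))) ^ n := by
      calc ∑ j ∈ Finset.Icc 1 (q - 1), (g : ZMod (q ^ (i + 1))) ^ n * ((j : ℕ) : ZMod (q ^ (i + 1))) ^ n
          = ∑ j ∈ Finset.Icc 1 (q - 1), (((g * j : ℕ) : ZMod (q ^ (i + 1)))) ^ n := by
            apply Finset.sum_congr rfl
            intro j _
            push_cast
            rw [mul_pow]
        _ = ∑ j ∈ Finset.Icc 1 (q - 1), (((g * j) % q : ℕ) : ZMod (q ^ (i + 1))) ^ n := by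
            apply Finset.sum_congr rfl
            intro j _
            exact keyN _ _ (Nat.mod_mod_of_dvd _ dvd_rfl).symm
        _ = ∑ j ∈ Finset.Icc 1 (q - 1), ((j : ℕ) : ZMod (q ^ (i + 1))) ^ n := hperm
    rw [hsum, sub_self]
  -- first conclusion
  have hdvd1 : ((q : ℤ)) ^ (i + 1) ∣ ((g : ℤ) ^ n - 1) * (S n q : ℤ) := by
    have : ((((g : ℤ) ^ n - 1) * (S n q : ℤ) : ℤ) : ZMod (q ^ (i + 1))) = 0 := by
      push_cast
      exact_mod_cast hmain
    have := (ZMod.intCast_zmod_eq_zero_iff_dvd _ (q ^ (i + 1))).mp this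
    push_cast at this
    exact this
  have goal1 : ((g : ℤ) ^ n - 1) * (S n q : ℤ) ≡ 0 [ZMOD ((q : ℤ) ^ (i + 1))] :=
    (Int.modEq_zero_iff_dvd).mpr hdvd1
  -- second conclusion
  have goal2 : ¬ ((g : ℤ) ^ n ≡ 1 [ZMOD (q : ℤ)]) := by
    intro h
    have h1 : (((g : ℤ) ^ n : ℤ) : ZMod q) = ((1 : ℤ) : ZMod q) :=
      (ZMod.intCast_eq_intCast_iff _ _ _).mpr h
    push_cast at h1
    have := (hg.pow_eq_one_iff_dvd n).mp h1
    exact hnd this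
  -- third conclusion
  have hnd2 : ¬ (q : ℤ) ∣ ((g : ℤ) ^ n - 1) := by
    intro h
    apply goal2
    exact ((Int.modEq_iff_dvd).mpr h).symm
  have hdvd2 : ((q : ℤ)) ^ (i + 1) ∣ (S n q : ℤ) :=
    (Nat.prime_iff_prime_int.mp hq).pow_dvd_of_dvd_mul_left (i + 1) hnd2 hdvd1
  have goal3 : S n q ≡ 0 [MOD q ^ (i + 1)] := by
    have : (q ^ (i + 1) : ℕ) ∣ S n q := by
      have h := hdvd2
      rw [show ((q : ℤ)) ^ (i + 1) = ((q ^ (i + 1) : ℕ) : ℤ) by push_cast; ring] at h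
      exact_mod_cast h
    exact (Nat.modEq_zero_iff_dvd).mpr this
  exact ⟨goal1, goal2, goal3⟩
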